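/- There exists a universal constant C' > 0 with the following property. Let f^{(1)}, …, f^{(m)} ∈ ℝ^n be the frequency vectors of an insertion-only stream, let Z_1, …, Z_n be i.i.d. standard Gaussian random variables, and define X_t = ∑_{j=1}^n Z_j f_j^{(t)} for t ∈ [m]. Then E[ sup_{t ∈ [m]} |X_t| ] ≤ C' · ‖f^{(m)}‖₂. -/

import Mathlib

open MeasureTheory ProbabilityTheory
open scoped ENNReal

/-- The Euclidean (ℓ₂) norm of a vector in ℝ^k. -/
noncomputable def l2norm {k : ℕ} (x : Fin k → ℝ) : ℝ := Real.sqrt (∑ i, (x i) ^ 2)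

/-- The frequency vector at time `t` of the insertion-only stream `p` over universe `[n]`:
`freq p t j = #{t' ≤ t : p_{t'} = j}` (with stream positions `0, …, m-1` standing for
`1, …, m`, so position `t'` counts iff `t' < t`). -/
noncomputable def freq {n m : ℕ} (p : Fin m → Fin n) (t : ℕ) : Fin n → ℝ :=
  fun j => ((Finset.univ.filter fun t' : Fin m => (t' : ℕ) < t ∧ p t' = j).card : ℝ)

/-! ### Auxiliary real-analysis lemmas -/

open scoped NNReal

namespace ChainAux

lemma abs_le_exp_bound {y a L : ℝ} (hL : 0 < L) (ha : 0 ≤ a) :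
    |y| ≤ a + (Real.exp (L*(y-a)) + Real.exp (L*(-y-a)))/L := by
  rcases le_or_gt |y| a with h | h
  · have h0 : 0 ≤ (Real.exp (L*(y-a)) + Real.exp (L*(-y-a)))/L := by positivity
    linarith
  · have h1 : L * (|y| - a) ≤ Real.exp (L * (|y| - a)) := by
      have := Real.add_one_le_exp (L * (|y| - a)); linarith
    have h2 : Real.exp (L*(|y|-a)) ≤ Real.exp (L*(y-a)) + Real.exp (L*(-y-a)) := by
      rcases abs_cases y with ⟨hy, _⟩ | ⟨hy, _⟩
      · rw [hy]; exact le_add_of_nonneg_right (Real.exp_pos _).le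
      · rw [hy]; exact le_add_of_nonneg_left (Real.exp_pos _).le
    have h3 : |y| - a ≤ Real.exp (L*(|y|-a))/L := by
      rw [le_div_iff₀ hL]; nlinarith
    have h4 : Real.exp (L*(|y|-a))/L ≤ (Real.exp (L*(y-a)) + Real.exp (L*(-y-a)))/L := by
      gcongr
    linarith

lemma d2_triangle_sq {n : ℕ} (x y z : Fin n → ℝ) :
    (∑ j, (x j - z j)^2) ≤ 2 * (∑ j, (x j - y j)^2) + 2 * (∑ j, (y j - z j)^2) := by
  rw [Finset.mul_sum, Finset.mul_sum, ← Finset.sum_add_distrib]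
  refine Finset.sum_le_sum (fun j _ => ?_)
  nlinarith [sq_nonneg (x j - 2 * y j + z j)]

lemma poly_le_sqrt2pow : ∀ ℓ : ℕ, (4*ℓ+8 : ℝ) ≤ 25 * (Real.sqrt 2)^ℓ := by
  intro ℓ
  induction ℓ with
  | zero => norm_num
  | succ k ih =>
    have h2 : (1:ℝ) ≤ Real.sqrt 2 := by
      nlinarith [Real.sq_sqrt (by norm_num : (0:ℝ) ≤ 2), Real.sqrt_nonneg 2]
    have hp : (1:ℝ) ≤ (Real.sqrt 2)^k := one_le_pow₀ h2
    have hstep : 25 * (Real.sqrt 2)^k + 4 ≤ 25 * (Real.sqrt 2)^(k+1) := by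
      rw [pow_succ]
      nlinarith [Real.sq_sqrt (by norm_num : (0:ℝ) ≤ 2), Real.sqrt_nonneg 2]
    push_cast
    push_cast at ih
    linarith

lemma geom_sum_le_seven (L : ℕ) :
    ∑ ℓ ∈ Finset.range L, ((Real.sqrt (Real.sqrt 2))⁻¹)^ℓ ≤ 7 := by
  set r := (Real.sqrt (Real.sqrt 2))⁻¹ with hr
  have hs2 : (1:ℝ) < Real.sqrt 2 := by
    nlinarith [Real.sq_sqrt (by norm_num : (0:ℝ) ≤ 2), Real.sqrt_nonneg 2]
  have hs4 : (7/6 : ℝ) ≤ Real.sqrt (Real.sqrt 2) := by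
    have h1 : ((7/6:ℝ))^2 ≤ Real.sqrt 2 := by
      nlinarith [Real.sq_sqrt (by norm_num : (0:ℝ) ≤ 2), Real.sqrt_nonneg 2]
    nlinarith [Real.sq_sqrt (le_of_lt (lt_trans one_pos hs2)),
      Real.sqrt_nonneg (Real.sqrt 2)]
  have hs4pos : 0 < Real.sqrt (Real.sqrt 2) := by linarith
  have hrle : r ≤ 6/7 := by
    rw [hr, inv_le_comm₀ hs4pos (by norm_num)]
    linarith
  have hrpos : 0 ≤ r := by positivity
  have hne : r ≠ 1 := by
    intro h; rw [h] at hrle; norm_num at hrle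
  have hrL : 0 ≤ r^L := pow_nonneg hrpos L
  calc ∑ ℓ ∈ Finset.range L, r^ℓ = (r^L - 1)/(r - 1) := geom_sum_eq hne L
    _ = (1 - r^L)/(1 - r) := by
        have h1 : r - 1 ≠ 0 := by intro h; apply hne; linarith
        have h2 : (1:ℝ) - r ≠ 0 := by intro h; apply hne; linarith
        rw [div_eq_div_iff h1 h2]
        ring
    _ ≤ 7 := by
        rw [div_le_iff₀ (by linarith : (0:ℝ) < 1 - r)]
        nlinarith

lemma sqrt_two_pow (ℓ : ℕ) : Real.sqrt (2^ℓ) = (Real.sqrt 2)^ℓ := by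
  induction ℓ with
  | zero => simp
  | succ k ih =>
    rw [pow_succ, pow_succ, ← ih, ← Real.sqrt_mul (by positivity)]

/-! ### Gaussian moment generating function -/

lemma gauss_density_eq (c : ℝ) : ∀ x : ℝ, gaussianPDFReal 0 1 x * Real.exp (c * x)
    = ((Real.sqrt (2 * Real.pi))⁻¹ * Real.exp (c^2/2)) * Real.exp (-(1/2) * (x - c)^2) := by
  intro x
  rw [gaussianPDFReal_def]
  simp only [NNReal.coe_one, mul_one, sub_zero]
  rw [mul_assoc, mul_assoc, ← Real.exp_add, ← Real.exp_add]
  congr 2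
  ring

lemma integrable_pdf_exp (c : ℝ) :
    Integrable (fun x => gaussianPDFReal 0 1 x * Real.exp (c * x)) := by
  have h : Integrable (fun x : ℝ => Real.exp (-(1/2) * (x - c)^2)) := by
    have := (integrable_exp_neg_mul_sq (by norm_num : (0:ℝ) < 1/2)).comp_sub_right c
    simpa using this
  have h2 := (h.const_mul ((Real.sqrt (2 * Real.pi))⁻¹ * Real.exp (c^2/2)))
  refine h2.congr ?_
  filter_upwards with x
  rw [gauss_density_eq]

lemma integral_pdf_exp (c : ℝ) :
    ∫ x, gaussianPDFReal 0 1 x * Real.exp (c * x) = Real.exp (c^2/2) := by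
  simp_rw [gauss_density_eq c]
  rw [integral_const_mul]
  have h1 : ∫ x : ℝ, Real.exp (-(1/2) * (x - c)^2) = ∫ x : ℝ, Real.exp (-(1/2) * x^2) :=
    integral_sub_right_eq_self (μ := volume) (fun x => Real.exp (-(1/2) * x^2)) c
  rw [h1, integral_gaussian]
  have h2 : Real.pi / (1/2) = 2 * Real.pi := by ring
  rw [h2, mul_comm (Real.sqrt (2 * Real.pi))⁻¹, mul_assoc,
    inv_mul_cancel₀ (by positivity : Real.sqrt (2*Real.pi) ≠ 0), mul_one]

lemma gaussianReal_eq_withDensity :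
    gaussianReal 0 1 = volume.withDensity
      (fun x => ((Real.toNNReal (gaussianPDFReal 0 1 x) : ℝ≥0) : ℝ≥0∞)) := by
  rw [gaussianReal_of_var_ne_zero 0 one_ne_zero]
  rfl

lemma smul_eq_mul_pdf (c : ℝ) (x : ℝ) :
    (Real.toNNReal (gaussianPDFReal 0 1 x) : ℝ≥0) • Real.exp (c * x)
      = gaussianPDFReal 0 1 x * Real.exp (c * x) := by
  rw [NNReal.smul_def, Real.coe_toNNReal _ (gaussianPDFReal_nonneg 0 1 x)]
  rfl

lemma integrable_exp_mul_gaussianReal (c : ℝ) :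
    Integrable (fun x => Real.exp (c * x)) (gaussianReal 0 1) := by
  rw [gaussianReal_eq_withDensity,
    integrable_withDensity_iff_integrable_smul
      ((measurable_gaussianPDFReal 0 1).real_toNNReal)]
  refine (integrable_pdf_exp c).congr ?_
  filter_upwards with x
  rw [smul_eq_mul_pdf]

lemma integral_exp_mul_gaussianReal (c : ℝ) :
    ∫ x, Real.exp (c * x) ∂(gaussianReal 0 1) = Real.exp (c^2/2) := by
  rw [gaussianReal_eq_withDensity,
    integral_withDensity_eq_integral_smul
      ((measurable_gaussianPDFReal 0 1).real_toNNReal)]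
  simp_rw [smul_eq_mul_pdf]
  exact integral_pdf_exp c

section Prob

variable {n : ℕ} {Ω : Type} [MeasurableSpace Ω] {μ : Measure Ω} [IsProbabilityMeasure μ]
  {Z : Fin n → Ω → ℝ}

omit [IsProbabilityMeasure μ] in
lemma integrable_exp_single (hmeas : ∀ i, Measurable (Z i))
    (hg : ∀ i, Measure.map (Z i) μ = gaussianReal 0 1) (i : Fin n) (c : ℝ) :
    Integrable (fun ω => Real.exp (c * Z i ω)) μ := by
  have h := integrable_exp_mul_gaussianReal c
  rw [← hg i] at h
  rw [integrable_map_measure ((measurable_const_mul c).exp).aestronglyMeasurable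
    (hmeas i).aemeasurable] at h
  exact h

omit [IsProbabilityMeasure μ] in
lemma integral_exp_single (hmeas : ∀ i, Measurable (Z i))
    (hg : ∀ i, Measure.map (Z i) μ = gaussianReal 0 1) (i : Fin n) (c : ℝ) :
    ∫ ω, Real.exp (c * Z i ω) ∂μ = Real.exp (c^2/2) := by
  have h := integral_exp_mul_gaussianReal c
  rw [← hg i, integral_map (hmeas i).aemeasurable
    ((measurable_const_mul c).exp).aestronglyMeasurable] at h
  exact h

lemma exp_inner_facts (hmeas : ∀ i, Measurable (Z i))
    (hind : iIndepFun Z μ)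
    (hg : ∀ i, Measure.map (Z i) μ = gaussianReal 0 1) (v : Fin n → ℝ) (c : ℝ) :
    Integrable (fun ω => Real.exp (c * ∑ j, Z j ω * v j)) μ ∧
    ∫ ω, Real.exp (c * ∑ j, Z j ω * v j) ∂μ = Real.exp (c^2 * (∑ j, (v j)^2) / 2) := by
  classical
  set W : Fin n → Ω → ℝ := fun j ω => Z j ω * v j with hW
  have hWmeas : ∀ j, Measurable (W j) := fun j => (hmeas j).mul_const _
  have hWind : iIndepFun W μ :=
    hind.comp (fun j x => x * v j) (fun j => measurable_mul_const _)
  have hsum : ∀ ω, (∑ j, W j) ω = ∑ j, Z j ω * v j := by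
    intro ω; simp [hW]
  have hWint : ∀ j, Integrable (fun ω => Real.exp (c * W j ω)) μ := by
    intro j
    have := integrable_exp_single hmeas hg j (c * v j)
    refine this.congr ?_
    filter_upwards with ω
    rw [hW]; ring_nf
  have hWmgf : ∀ j, mgf (W j) μ c = Real.exp ((c * v j)^2/2) := by
    intro j
    rw [mgf]
    rw [← integral_exp_single hmeas hg j (c * v j)]
    congr 1; funext ω; rw [hW]; ring_nf
  constructor
  · have := hWind.integrable_exp_mul_sum (t := c) hWmeas (s := Finset.univ)
      (fun j _ => hWint j)
    refine this.congr ?_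
    filter_upwards with ω
    rw [hsum]
  · have hm := hWind.mgf_sum hWmeas (t := c) Finset.univ
    rw [mgf] at hm
    have hl : (∫ ω, Real.exp (c * (∑ j, W j) ω) ∂μ)
        = ∫ ω, Real.exp (c * ∑ j, Z j ω * v j) ∂μ := by
      congr 1; funext ω; rw [hsum]
    rw [hl] at hm
    rw [hm]
    rw [Finset.prod_congr rfl (fun j _ => hWmgf j), ← Real.exp_sum]
    congr 1
    rw [Finset.mul_sum, Finset.sum_div]
    exact Finset.sum_congr rfl (fun j _ => by ring)

lemma emax {ι : Type} (hmeas : ∀ i, Measurable (Z i))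
    (hind : iIndepFun Z μ)
    (hg : ∀ i, Measure.map (Z i) μ = gaussianReal 0 1)
    (S : Finset ι) (hS : S.Nonempty) (v : ι → Fin n → ℝ) (s : ℝ) (hs : 0 < s)
    (hv : ∀ i ∈ S, (∑ j, (v i j)^2) ≤ s^2) :
    Integrable (fun ω => S.sup' hS (fun i => |∑ j, Z j ω * v i j|)) μ ∧
    ∫ ω, S.sup' hS (fun i => |∑ j, Z j ω * v i j|) ∂μ
      ≤ s * (Real.sqrt (2 * Real.log (2 * S.card)) + 1) := by
  classical
  set N : ℝ := (S.card : ℝ) with hNdef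
  have hN1 : 1 ≤ N := by
    have h := Finset.card_pos.mpr hS
    rw [hNdef]
    exact_mod_cast h
  set b := Real.log (2*N) with hbdef
  have hlog4 : (1:ℝ) ≤ Real.log 4 := by
    rw [Real.le_log_iff_exp_le (by norm_num)]
    have := Real.exp_one_lt_d9
    linarith
  have hb2 : 1 ≤ 2*b := by
    have h24 : Real.log 4 ≤ Real.log (2*N) + Real.log (2*N) := by
      have h1 : Real.log 2 ≤ Real.log (2*N) := Real.log_le_log (by norm_num) (by linarith)
      have h2 : Real.log 4 = Real.log 2 + Real.log 2 := by
        rw [← Real.log_mul (by norm_num) (by norm_num)]; norm_num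
      linarith
    rw [hbdef]; linarith
  have hbpos : 0 < b := by linarith
  set q := Real.sqrt (2*b) with hqdef
  have hq2 : q^2 = 2*b := Real.sq_sqrt (by linarith)
  have hq1 : 1 ≤ q := by
    nlinarith [Real.sqrt_nonneg (2*b)]
  have hqpos : 0 < q := by linarith
  set a := s * q with hadef
  set L := q / s with hLdef
  have ha : 0 < a := by positivity
  have hL : 0 < L := by positivity
  set Y : ι → Ω → ℝ := fun i ω => ∑ j, Z j ω * v i j with hYdef
  set G : Ω → ℝ := fun ω =>
    a + (∑ i ∈ S, (Real.exp (L*(Y i ω - a)) + Real.exp (L*(-Y i ω - a))))/L with hGdef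
  have hint1 : ∀ i, Integrable (fun ω => Real.exp (L*(Y i ω - a))) μ := by
    intro i
    have h := ((exp_inner_facts hmeas hind hg (v i) L).1.const_mul (Real.exp (-(L*a))))
    refine h.congr ?_
    filter_upwards with ω
    rw [← Real.exp_add]; congr 1; ring
  have hint2 : ∀ i, Integrable (fun ω => Real.exp (L*(-Y i ω - a))) μ := by
    intro i
    have h := ((exp_inner_facts hmeas hind hg (v i) (-L)).1.const_mul (Real.exp (-(L*a))))
    refine h.congr ?_
    filter_upwards with ω
    rw [← Real.exp_add]; congr 1; ring
  have hadd : ∀ i ∈ S, Integrable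
      (fun ω => Real.exp (L*(Y i ω - a)) + Real.exp (L*(-Y i ω - a))) μ :=
    fun i _ => (hint1 i).add (hint2 i)
  have hsumint : Integrable (fun ω =>
      ∑ i ∈ S, (Real.exp (L*(Y i ω - a)) + Real.exp (L*(-Y i ω - a)))) μ :=
    integrable_finset_sum S hadd
  have hGint : Integrable G μ := by
    refine (integrable_const a).add ?_
    exact hsumint.div_const L
  have hpt : ∀ ω, S.sup' hS (fun i => |Y i ω|) ≤ G ω := by
    intro ω
    refine Finset.sup'_le hS _ (fun i hi => ?_)
    refine (abs_le_exp_bound hL ha.le).trans ?_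
    rw [hGdef]
    have h2 : Real.exp (L*(Y i ω - a)) + Real.exp (L*(-Y i ω - a))
        ≤ ∑ i' ∈ S, (Real.exp (L*(Y i' ω - a)) + Real.exp (L*(-Y i' ω - a))) :=
      Finset.single_le_sum
        (f := fun i' => Real.exp (L*(Y i' ω - a)) + Real.exp (L*(-Y i' ω - a)))
        (fun i' _ => by positivity) hi
    have h3 : (Real.exp (L*(Y i ω - a)) + Real.exp (L*(-Y i ω - a)))/L
        ≤ (∑ i' ∈ S, (Real.exp (L*(Y i' ω - a)) + Real.exp (L*(-Y i' ω - a))))/L := by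
      gcongr
    linarith
  have hYmeas : ∀ i, Measurable (Y i) := by
    intro i
    exact Finset.measurable_sum _ (fun j _ => (hmeas j).mul_const _)
  have hsupmeas : Measurable (fun ω => S.sup' hS (fun i => |Y i ω|)) := by
    have h := Finset.measurable_sup' hS (fun i (_ : i ∈ S) => (hYmeas i).abs)
    convert h using 1
    funext ω
    rw [Finset.sup'_apply]
  obtain ⟨i0, hi0⟩ := hS
  have hsupnn : ∀ ω, 0 ≤ S.sup' ⟨i0, hi0⟩ (fun i => |Y i ω|) := by
    intro ω
    exact le_trans (abs_nonneg (Y i0 ω)) (Finset.le_sup' (fun i => |Y i ω|) hi0)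
  have hint : Integrable (fun ω => S.sup' ⟨i0, hi0⟩ (fun i => |Y i ω|)) μ := by
    refine hGint.mono' hsupmeas.aestronglyMeasurable ?_
    filter_upwards with ω
    rw [Real.norm_eq_abs, abs_of_nonneg (hsupnn ω)]
    exact hpt ω
  refine ⟨hint, ?_⟩
  have hmono := integral_mono hint hGint hpt
  refine hmono.trans ?_
  have hGval : ∫ ω, G ω ∂μ
      = a + (∑ i ∈ S, ((∫ ω, Real.exp (L*(Y i ω - a)) ∂μ)
          + ∫ ω, Real.exp (L*(-Y i ω - a)) ∂μ))/L := by
    rw [hGdef, integral_add (integrable_const a) (hsumint.div_const L),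
      integral_const, probReal_univ]
    simp only [ENNReal.toReal_one, smul_eq_mul, one_mul]
    congr 1
    rw [integral_div, integral_finset_sum S hadd]
    congr 1
    exact Finset.sum_congr rfl (fun i _ => integral_add (hint1 i) (hint2 i))
  rw [hGval]
  have hival : ∀ (c : ℝ) (i), i ∈ S → c^2 = L^2 →
      ∫ ω, Real.exp (c * Y i ω) ∂μ ≤ Real.exp (b) := by
    intro c i hi hc
    rw [(exp_inner_facts hmeas hind hg (v i) c).2]
    apply Real.exp_le_exp.mpr
    have hvi := hv i hi
    have hL2 : L^2 = 2*b/s^2 := by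
      rw [hLdef, div_pow, hq2]
    have hvnn : 0 ≤ ∑ j, (v i j)^2 := Finset.sum_nonneg (fun j _ => sq_nonneg _)
    rw [hc, hL2]
    rw [div_mul_eq_mul_div, div_div]
    rw [div_le_iff₀ (by positivity)]
    have hss : 0 < s^2 := by positivity
    nlinarith
  have hup1 : ∀ i, i ∈ S → ∫ ω, Real.exp (L*(Y i ω - a)) ∂μ
      ≤ Real.exp (-(L*a)) * Real.exp b := by
    intro i hi
    have he : (fun ω => Real.exp (L*(Y i ω - a)))
        = fun ω => Real.exp (-(L*a)) * Real.exp (L * Y i ω) := by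
      funext ω; rw [← Real.exp_add]; congr 1; ring
    rw [he, integral_const_mul]
    have := hival L i hi rfl
    gcongr
  have hup2 : ∀ i, i ∈ S → ∫ ω, Real.exp (L*(-Y i ω - a)) ∂μ
      ≤ Real.exp (-(L*a)) * Real.exp b := by
    intro i hi
    have he : (fun ω => Real.exp (L*(-Y i ω - a)))
        = fun ω => Real.exp (-(L*a)) * Real.exp ((-L) * Y i ω) := by
      funext ω; rw [← Real.exp_add]; congr 1; ring
    rw [he, integral_const_mul]
    have := hival (-L) i hi (by ring)
    gcongr
  have hLa : L * a = 2*b := by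
    rw [hLdef, hadef]
    field_simp
    nlinarith [hq2]
  have hexpval : Real.exp (-(L*a)) * Real.exp b = (2*N)⁻¹ := by
    rw [← Real.exp_add, hLa]
    rw [show -(2*b) + b = -b from by ring, Real.exp_neg, hbdef, Real.exp_log (by linarith)]
  have hsumle : ∑ i ∈ S, ((∫ ω, Real.exp (L*(Y i ω - a)) ∂μ)
      + ∫ ω, Real.exp (L*(-Y i ω - a)) ∂μ) ≤ N * (2 * (2*N)⁻¹) := by
    have h1 : ∀ i ∈ S, (∫ ω, Real.exp (L*(Y i ω - a)) ∂μ)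
        + ∫ ω, Real.exp (L*(-Y i ω - a)) ∂μ ≤ 2 * (2*N)⁻¹ := by
      intro i hi
      have e1 := hup1 i hi
      have e2 := hup2 i hi
      rw [hexpval] at e1 e2
      linarith
    calc ∑ i ∈ S, ((∫ ω, Real.exp (L*(Y i ω - a)) ∂μ)
        + ∫ ω, Real.exp (L*(-Y i ω - a)) ∂μ) ≤ ∑ _i ∈ S, 2 * (2*N)⁻¹ :=
          Finset.sum_le_sum h1
      _ = N * (2 * (2*N)⁻¹) := by rw [Finset.sum_const, nsmul_eq_mul, hNdef]
  have hfin : N * (2 * (2*N)⁻¹) = 1 := by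
    rw [show N * (2 * (2*N)⁻¹) = (2*N) * (2*N)⁻¹ from by ring,
      mul_inv_cancel₀ (by linarith)]
  have hend : a + (∑ i ∈ S, ((∫ ω, Real.exp (L*(Y i ω - a)) ∂μ)
      + ∫ ω, Real.exp (L*(-Y i ω - a)) ∂μ))/L ≤ a + 1/L := by
    gcongr
    rw [← hfin] at *
    exact hsumle
  refine hend.trans ?_
  have h1L : 1/L = s/q := by
    rw [hLdef]; field_simp
  rw [h1L, hadef]
  have hsq : s/q ≤ s := by
    rw [div_le_iff₀ hqpos]
    nlinarith
  nlinarith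

end Prob

/-! ### The combinatorial net on the stream path -/

section Comb

variable {n m : ℕ} (p : Fin m → Fin n)

noncomputable def d2 {n : ℕ} (v w : Fin n → ℝ) : ℝ := ∑ j, (v j - w j)^2

noncomputable def SS (t : ℕ) : ℝ := ∑ j, (freq p t j)^2

lemma freq_nonneg (t : ℕ) (j : Fin n) : 0 ≤ freq p t j := Nat.cast_nonneg _

lemma freq_mono {s t : ℕ} (h : s ≤ t) (j : Fin n) : freq p s j ≤ freq p t j := by
  unfold freq
  have : (Finset.univ.filter fun t' : Fin m => (t' : ℕ) < s ∧ p t' = j)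
      ⊆ (Finset.univ.filter fun t' : Fin m => (t' : ℕ) < t ∧ p t' = j) := by
    intro x hx
    simp only [Finset.mem_filter] at *
    exact ⟨hx.1, lt_of_lt_of_le hx.2.1 h, hx.2.2⟩
  exact_mod_cast Finset.card_le_card this

lemma freq_le_final (t : ℕ) (j : Fin n) : freq p t j ≤ freq p m j := by
  unfold freq
  have : (Finset.univ.filter fun t' : Fin m => (t' : ℕ) < t ∧ p t' = j)
      ⊆ (Finset.univ.filter fun t' : Fin m => (t' : ℕ) < m ∧ p t' = j) := by
    intro x hx
    simp only [Finset.mem_filter] at *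
    exact ⟨hx.1, x.isLt, hx.2.2⟩
  exact_mod_cast Finset.card_le_card this

lemma freq_zero (j : Fin n) : freq p 0 j = 0 := by
  unfold freq
  norm_num

lemma SS_nonneg (t : ℕ) : 0 ≤ SS p t := Finset.sum_nonneg (fun j _ => sq_nonneg _)

lemma SS_le_final (t : ℕ) : SS p t ≤ SS p m := by
  refine Finset.sum_le_sum (fun j _ => ?_)
  exact pow_le_pow_left₀ (freq_nonneg p t j) (freq_le_final p t j) 2

lemma d2_nonneg (v w : Fin n → ℝ) : 0 ≤ d2 v w := Finset.sum_nonneg (fun j _ => sq_nonneg _)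

lemma d2_self (v : Fin n → ℝ) : d2 v v = 0 := by simp [d2]

lemma d2_comm (v w : Fin n → ℝ) : d2 v w = d2 w v := by
  unfold d2
  exact Finset.sum_congr rfl (fun j _ => by ring)

lemma d2_le_SS_diff {s t : ℕ} (h : s ≤ t) :
    d2 (freq p t) (freq p s) ≤ SS p t - SS p s := by
  unfold d2 SS
  rw [← Finset.sum_sub_distrib]
  refine Finset.sum_le_sum (fun j _ => ?_)
  have h1 := freq_mono p h j
  have h0 := freq_nonneg p s j
  nlinarith

lemma d2_zero_right (t : ℕ) : d2 (freq p t) (freq p 0) = SS p t := by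
  unfold d2 SS
  refine Finset.sum_congr rfl (fun j _ => ?_)
  rw [freq_zero]
  ring

lemma d2_one_le {s t : ℕ} (h : freq p s ≠ freq p t) :
    1 ≤ d2 (freq p s) (freq p t) := by
  obtain ⟨j, hj⟩ := Function.ne_iff.mp h
  have h1 : 1 ≤ (freq p s j - freq p t j)^2 := by
    unfold freq at *
    set cs := (Finset.univ.filter fun t' : Fin m => (t' : ℕ) < s ∧ p t' = j).card
    set ct := (Finset.univ.filter fun t' : Fin m => (t' : ℕ) < t ∧ p t' = j).card
    have hne : cs ≠ ct := by
      intro hc; exact hj (by rw [hc])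
    rcases Nat.lt_or_ge cs ct with hlt | hge
    · have : (cs:ℝ) + 1 ≤ ct := by exact_mod_cast hlt
      nlinarith
    · have hlt2 : ct < cs := lt_of_le_of_ne hge (fun hc => hne hc.symm)
      have : (ct:ℝ) + 1 ≤ cs := by exact_mod_cast hlt2
      nlinarith
  calc (1:ℝ) ≤ (freq p s j - freq p t j)^2 := h1
    _ ≤ d2 (freq p s) (freq p t) :=
      Finset.single_le_sum (f := fun j => (freq p s j - freq p t j)^2)
        (fun j _ => sq_nonneg _) (Finset.mem_univ j)

variable (ε2 : ℝ)

noncomputable def nxt (s : ℕ) : ℕ :=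
  if h : ∃ t, t ≤ m ∧ s < t ∧ ε2 < d2 (freq p t) (freq p s) then Nat.find h else m+1

noncomputable def net : ℕ → ℕ := fun i => Nat.rec 0 (fun _ s => nxt p ε2 s) i

lemma net_zero : net p ε2 0 = 0 := rfl

lemma net_succ (i : ℕ) : net p ε2 (i+1) = nxt p ε2 (net p ε2 i) := rfl

lemma nxt_spec {s : ℕ} (h : nxt p ε2 s ≤ m) :
    s < nxt p ε2 s ∧ ε2 < d2 (freq p (nxt p ε2 s)) (freq p s) := by
  unfold nxt at *
  by_cases h' : ∃ t, t ≤ m ∧ s < t ∧ ε2 < d2 (freq p t) (freq p s)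
  · rw [dif_pos h'] at *
    have := Nat.find_spec h'
    exact ⟨this.2.1, this.2.2⟩
  · rw [dif_neg h'] at h
    omega

lemma net_succ_spec (i : ℕ) (h : net p ε2 (i+1) ≤ m) :
    net p ε2 i < net p ε2 (i+1) ∧ net p ε2 i ≤ m ∧
      ε2 < d2 (freq p (net p ε2 (i+1))) (freq p (net p ε2 i)) := by
  rw [net_succ] at h ⊢
  obtain ⟨ha, hb⟩ := nxt_spec p ε2 h
  exact ⟨ha, le_trans (le_of_lt ha) h, hb⟩

lemma le_net (i : ℕ) (h : net p ε2 i ≤ m) : i ≤ net p ε2 i := by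
  induction i with
  | zero => exact Nat.zero_le _
  | succ k ih =>
    obtain ⟨ha, hb, _⟩ := net_succ_spec p ε2 k h
    have := ih hb
    omega

lemma SS_net (i : ℕ) (h : net p ε2 i ≤ m) : (i:ℝ) * ε2 ≤ SS p (net p ε2 i) := by
  induction i with
  | zero => simpa using SS_nonneg p (net p ε2 0)
  | succ k ih =>
    obtain ⟨ha, hb, hc⟩ := net_succ_spec p ε2 k h
    have h2 := d2_le_SS_diff p (le_of_lt ha)
    have h3 := ih hb
    push_cast
    nlinarith

noncomputable def idx (t : ℕ) : ℕ := Nat.findGreatest (fun i => net p ε2 i ≤ t) t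

lemma net_idx_le (t : ℕ) : net p ε2 (idx p ε2 t) ≤ t := by
  have h0 : net p ε2 0 ≤ t := by rw [net_zero]; exact Nat.zero_le t
  exact Nat.findGreatest_spec (P := fun i => net p ε2 i ≤ t) (Nat.zero_le t) h0

lemma d2_idx (hε : 0 ≤ ε2) {t : ℕ} (ht : t ≤ m) :
    d2 (freq p t) (freq p (net p ε2 (idx p ε2 t))) ≤ ε2 := by
  set i := idx p ε2 t with hidef
  have hs0 : net p ε2 i ≤ t := net_idx_le p ε2 t
  rcases eq_or_lt_of_le hs0 with heq | hlt
  · rw [heq, d2_self]; exact hε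
  · by_contra hgt
    push_neg at hgt
    have hex : ∃ u, u ≤ m ∧ net p ε2 i < u ∧ ε2 < d2 (freq p u) (freq p (net p ε2 i)) :=
      ⟨t, ht, hlt, hgt⟩
    have hfind : net p ε2 (i+1) ≤ t := by
      rw [net_succ]
      unfold nxt
      rw [dif_pos hex]
      exact Nat.find_min' hex ⟨ht, hlt, hgt⟩
    have hi1 : i + 1 ≤ t := by
      have h1 : net p ε2 i ≤ m := le_trans hs0 ht
      have := le_net p ε2 i h1
      omega
    exact Nat.findGreatest_is_greatest (P := fun i => net p ε2 i ≤ t)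
      (hidef ▸ Nat.lt_succ_self i) hi1 hfind

lemma idx_mul_le (t : ℕ) (ht : t ≤ m) :
    (idx p ε2 t : ℝ) * ε2 ≤ SS p m := by
  have h1 : net p ε2 (idx p ε2 t) ≤ m := le_trans (net_idx_le p ε2 t) ht
  exact le_trans (SS_net p ε2 _ h1) (SS_le_final p _)

lemma net_level0 (i : ℕ) (hi : 1 ≤ i) : net p (SS p m) i = m + 1 := by
  induction i with
  | zero => omega
  | succ k ih =>
    by_cases hk : 1 ≤ k
    · rw [net_succ, ih hk]
      unfold nxt
      rw [dif_neg]
      rintro ⟨u, hu1, hu2, _⟩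
      omega
    · have hk0 : k = 0 := by omega
      subst hk0
      rw [net_succ, net_zero]
      unfold nxt
      rw [dif_neg]
      rintro ⟨u, hu1, _, hu3⟩
      rw [d2_zero_right] at hu3
      exact absurd hu3 (not_lt.mpr (SS_le_final p u))

lemma net_idx_level0 {t : ℕ} (ht : t ≤ m) :
    net p (SS p m) (idx p (SS p m) t) = 0 := by
  have h := net_idx_le p (SS p m) t
  rcases Nat.eq_zero_or_pos (idx p (SS p m) t) with h0 | h1
  · rw [h0, net_zero]
  · rw [net_level0 p _ h1] at h
    omega


/-! ### Level structure for the chaining argument -/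

noncomputable def lvl (ℓ : ℕ) : ℝ := SS p m / 2^ℓ

noncomputable def netA (ℓ i : ℕ) : ℕ := net p (lvl p ℓ) i

noncomputable def idxI (ℓ t : ℕ) : ℕ := idx p (lvl p ℓ) t

noncomputable def vv (ℓ : ℕ) (q : ℕ × ℕ) : Fin n → ℝ :=
  fun j => freq p (netA p (ℓ+1) q.2) j - freq p (netA p ℓ q.1) j

noncomputable def Sl (ℓ : ℕ) : Finset (ℕ × ℕ) :=
  ((Finset.range (2^ℓ+1)) ×ˢ (Finset.range (2^(ℓ+1)+1))).filter
    (fun q => d2 (freq p (netA p (ℓ+1) q.2)) (freq p (netA p ℓ q.1)) ≤ 4 * lvl p ℓ)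

lemma SS_one_le (hm : 0 < m) : 1 ≤ SS p m := by
  have hc : (1:ℝ) ≤ freq p m (p ⟨0, hm⟩) := by
    unfold freq
    have hmem : (⟨0, hm⟩ : Fin m) ∈ Finset.univ.filter
        (fun t' : Fin m => (t' : ℕ) < m ∧ p t' = p ⟨0, hm⟩) := by
      simp only [Finset.mem_filter, Finset.mem_univ, true_and]
      exact ⟨hm, trivial⟩
    have hcard := Finset.card_pos.mpr ⟨_, hmem⟩
    exact_mod_cast hcard
  have h1 : (1:ℝ) ≤ (freq p m (p ⟨0, hm⟩))^2 := by nlinarith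
  refine h1.trans ?_
  exact Finset.single_le_sum (f := fun j => (freq p m j)^2)
    (fun j _ => sq_nonneg _) (Finset.mem_univ _)

lemma lvl_pos (hm : 0 < m) (ℓ : ℕ) : 0 < lvl p ℓ := by
  unfold lvl
  have := SS_one_le p hm
  positivity

lemma lvl_succ (ℓ : ℕ) : 2 * lvl p (ℓ+1) = lvl p ℓ := by
  unfold lvl
  rw [pow_succ]
  field_simp

lemma d2_center (hm : 0 < m) (ℓ : ℕ) {t : ℕ} (ht : t ≤ m) :
    d2 (freq p t) (freq p (netA p ℓ (idxI p ℓ t))) ≤ lvl p ℓ :=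
  d2_idx p (lvl p ℓ) (lvl_pos p hm ℓ).le ht

lemma idxI_le (hm : 0 < m) (ℓ : ℕ) {t : ℕ} (ht : t ≤ m) : idxI p ℓ t ≤ 2^ℓ := by
  have h := idx_mul_le p (lvl p ℓ) t ht
  have hS1 := SS_one_le p hm
  have hp2 : (0:ℝ) < 2^ℓ := by positivity
  have hlv : lvl p ℓ * 2^ℓ = SS p m := by
    unfold lvl
    field_simp
  have h3 : (idx p (lvl p ℓ) t : ℝ) ≤ 2^ℓ := by
    have h' := mul_le_mul_of_nonneg_right h hp2.le
    rw [mul_assoc, hlv] at h'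
    by_contra hcon
    push_neg at hcon
    nlinarith
  unfold idxI
  exact_mod_cast h3

lemma mem_Sl (hm : 0 < m) (ℓ : ℕ) {t : ℕ} (ht : t ≤ m) :
    (idxI p ℓ t, idxI p (ℓ+1) t) ∈ Sl p ℓ := by
  refine Finset.mem_filter.mpr ⟨Finset.mem_product.mpr ⟨?_, ?_⟩, ?_⟩
  · exact Finset.mem_range.mpr (Nat.lt_succ_of_le (idxI_le p hm ℓ ht))
  · exact Finset.mem_range.mpr (Nat.lt_succ_of_le (idxI_le p hm (ℓ+1) ht))
  · have h1 := d2_center p hm (ℓ+1) ht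
    have h2 := d2_center p hm ℓ ht
    have htr : d2 (freq p (netA p (ℓ+1) (idxI p (ℓ+1) t))) (freq p (netA p ℓ (idxI p ℓ t)))
        ≤ 2 * d2 (freq p (netA p (ℓ+1) (idxI p (ℓ+1) t))) (freq p t)
          + 2 * d2 (freq p t) (freq p (netA p ℓ (idxI p ℓ t))) :=
      d2_triangle_sq _ _ _
    rw [d2_comm _ (freq p t)] at htr
    have hsucc := lvl_succ p ℓ
    have hpos := lvl_pos p hm (ℓ+1)
    simp only
    linarith

lemma Sl_nonempty (hm : 0 < m) (ℓ : ℕ) : (Sl p ℓ).Nonempty :=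
  ⟨_, mem_Sl p hm ℓ (le_refl m)⟩

lemma vv_sq_le (ℓ : ℕ) : ∀ q ∈ Sl p ℓ, (∑ j, (vv p ℓ q j)^2) ≤ (2 * Real.sqrt (lvl p ℓ))^2 := by
  intro q hq
  have hcond := (Finset.mem_filter.mp hq).2
  have hsl2 : (2 * Real.sqrt (lvl p ℓ))^2 = 4 * lvl p ℓ := by
    rcases le_or_gt 0 (lvl p ℓ) with h | h
    · rw [mul_pow, Real.sq_sqrt h]; ring
    · rw [Real.sqrt_eq_zero_of_nonpos h.le] at *
      exfalso
      have := d2_nonneg (freq p (netA p (ℓ+1) q.2)) (freq p (netA p ℓ q.1))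
      nlinarith
  calc (∑ j, (vv p ℓ q j)^2)
      = d2 (freq p (netA p (ℓ+1) q.2)) (freq p (netA p ℓ q.1)) := rfl
    _ ≤ 4 * lvl p ℓ := hcond
    _ = (2 * Real.sqrt (lvl p ℓ))^2 := hsl2.symm

lemma final_eq {L t : ℕ} (hm : 0 < m) (ht : t ≤ m) (hL : SS p m < 2^L) :
    freq p (netA p L (idxI p L t)) = freq p t := by
  by_contra hne
  have h1 := d2_one_le p (fun h : freq p t = freq p (netA p L (idxI p L t)) => hne h.symm)
  have h2 := d2_center p hm L ht
  have h3 : lvl p L < 1 := by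
    unfold lvl
    rw [div_lt_one (by positivity)]
    exact hL
  linarith

lemma zero_eq {t : ℕ} (ht : t ≤ m) : netA p 0 (idxI p 0 t) = 0 := by
  have h0 : lvl p 0 = SS p m := by
    unfold lvl; norm_num
  unfold netA idxI
  rw [h0]
  exact net_idx_level0 p ht

lemma card_Sl (ℓ : ℕ) : 2 * ((Sl p ℓ).card : ℝ) ≤ 2^(2*ℓ+4) := by
  have h1 : (Sl p ℓ).card ≤ (2^ℓ+1) * (2^(ℓ+1)+1) := by
    refine le_trans (Finset.card_filter_le _ _) ?_
    rw [Finset.card_product, Finset.card_range, Finset.card_range]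
  have e1 : (2:ℕ)^ℓ+1 ≤ 2^(ℓ+1) := by
    have := Nat.one_le_two_pow (n := ℓ)
    rw [pow_succ]; omega
  have e2' : (2:ℕ)^(ℓ+1)+1 ≤ 2^(ℓ+2) := by
    have h1' := Nat.one_le_two_pow (n := ℓ+1)
    have h2' : (2:ℕ)^(ℓ+2) = 2^(ℓ+1)*2 := pow_succ 2 (ℓ+1)
    omega
  have h2 : 2 * ((2:ℕ)^ℓ+1) * (2^(ℓ+1)+1) ≤ 2^(2*ℓ+4) := by
    calc 2 * ((2:ℕ)^ℓ+1) * (2^(ℓ+1)+1) ≤ 2 * 2^(ℓ+1) * 2^(ℓ+2) :=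
          Nat.mul_le_mul (Nat.mul_le_mul_left _ e1) e2'
      _ = 2^(2*ℓ+4) := by
          rw [show 2*ℓ+4 = 1+(ℓ+1)+(ℓ+2) from by omega]; ring
  have h3 : 2 * (Sl p ℓ).card ≤ 2^(2*ℓ+4) := by
    calc 2 * (Sl p ℓ).card ≤ 2 * ((2^ℓ+1) * (2^(ℓ+1)+1)) := Nat.mul_le_mul_left _ h1
      _ = 2 * (2^ℓ+1) * (2^(ℓ+1)+1) := by ring
      _ ≤ 2^(2*ℓ+4) := h2
  exact_mod_cast h3

end Comb


end ChainAux

/-- **Chaining Inequality (Gaussian case).** There is a universal constant `C'` such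
that for the frequency vectors `f^(1), …, f^(m)` of any insertion-only stream and
i.i.d. standard Gaussians `Z_1, …, Z_n`, the process `X_t = ∑_j Z_j f_j^(t)` satisfies
`E[sup_{t ∈ [m]} |X_t|] ≤ C' ‖f^(m)‖₂`. -/
theorem chaining_inequality_gaussian :
    ∃ C' : ℝ, 0 < C' ∧
      ∀ (n m : ℕ), 0 < m →
      ∀ (p : Fin m → Fin n) (Ω : Type) [MeasurableSpace Ω] (μ : Measure Ω)
        [IsProbabilityMeasure μ] (Z : Fin n → Ω → ℝ),
        (∀ i, Measurable (Z i)) →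
        iIndepFun Z μ →
        (∀ i, Measure.map (Z i) μ = gaussianReal 0 1) →
        (∫ ω, (⨆ t : Fin m, |∑ j, Z j ω * freq p ((t : ℕ) + 1) j|) ∂μ)
          ≤ C' * l2norm (freq p m) := by
  classical
  refine ⟨200, by norm_num, ?_⟩
  intro n m hm p Ω _ μ _ Z hmeas hind hg
  have hSS1 : 1 ≤ ChainAux.SS p m := ChainAux.SS_one_le p hm
  have hSSpos : 0 < ChainAux.SS p m := by linarith
  have hσsq : (Real.sqrt (ChainAux.SS p m))^2 = ChainAux.SS p m := Real.sq_sqrt hSSpos.le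
  have hσ1 : 1 ≤ Real.sqrt (ChainAux.SS p m) := by
    nlinarith [Real.sqrt_nonneg (ChainAux.SS p m)]
  have hl2 : l2norm (freq p m) = Real.sqrt (ChainAux.SS p m) := rfl
  obtain ⟨L, hL⟩ : ∃ L : ℕ, ChainAux.SS p m < 2^L :=
    pow_unbounded_of_one_lt (ChainAux.SS p m) (by norm_num : (1:ℝ) < 2)
  have hemax := fun ℓ : ℕ => ChainAux.emax hmeas hind hg (ChainAux.Sl p ℓ)
    (ChainAux.Sl_nonempty p hm ℓ) (ChainAux.vv p ℓ) (2 * Real.sqrt (ChainAux.lvl p ℓ))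
    (by have h := ChainAux.lvl_pos p hm ℓ; positivity) (ChainAux.vv_sq_le p ℓ)
  -- pointwise chaining bound
  have hchain : ∀ ω, (⨆ t : Fin m, |∑ j, Z j ω * freq p ((t:ℕ)+1) j|)
      ≤ ∑ ℓ ∈ Finset.range L, (ChainAux.Sl p ℓ).sup' (ChainAux.Sl_nonempty p hm ℓ)
          (fun q => |∑ j, Z j ω * ChainAux.vv p ℓ q j|) := by
    intro ω
    have hne : Nonempty (Fin m) := ⟨⟨0, hm⟩⟩
    refine ciSup_le (fun t => ?_)
    have hu : (t:ℕ)+1 ≤ m := t.isLt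
    have htel : ∑ ℓ ∈ Finset.range L,
        ((∑ j, Z j ω * freq p (ChainAux.netA p (ℓ+1) (ChainAux.idxI p (ℓ+1) ((t:ℕ)+1))) j)
          - (∑ j, Z j ω * freq p (ChainAux.netA p ℓ (ChainAux.idxI p ℓ ((t:ℕ)+1))) j))
        = ∑ j, Z j ω * freq p ((t:ℕ)+1) j := by
      rw [Finset.sum_range_sub
        (f := fun ℓ => ∑ j, Z j ω * freq p (ChainAux.netA p ℓ (ChainAux.idxI p ℓ ((t:ℕ)+1))) j)]
      rw [ChainAux.final_eq p hm hu hL, ChainAux.zero_eq p hu]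
      have hz : (∑ j, Z j ω * freq p 0 j) = 0 := by
        refine Finset.sum_eq_zero (fun j _ => ?_)
        rw [ChainAux.freq_zero, mul_zero]
      rw [hz, sub_zero]
    rw [← htel]
    refine (Finset.abs_sum_le_sum_abs _ _).trans (Finset.sum_le_sum (fun ℓ hℓ => ?_))
    have hterm : (∑ j, Z j ω * freq p (ChainAux.netA p (ℓ+1) (ChainAux.idxI p (ℓ+1) ((t:ℕ)+1))) j)
          - (∑ j, Z j ω * freq p (ChainAux.netA p ℓ (ChainAux.idxI p ℓ ((t:ℕ)+1))) j)
        = ∑ j, Z j ω * ChainAux.vv p ℓ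
            (ChainAux.idxI p ℓ ((t:ℕ)+1), ChainAux.idxI p (ℓ+1) ((t:ℕ)+1)) j := by
      rw [← Finset.sum_sub_distrib]
      refine Finset.sum_congr rfl (fun j _ => ?_)
      unfold ChainAux.vv
      ring
    rw [hterm]
    exact Finset.le_sup' (fun q => |∑ j, Z j ω * ChainAux.vv p ℓ q j|)
      (ChainAux.mem_Sl p hm ℓ hu)
  -- integrate
  have hMint : Integrable (fun ω => ∑ ℓ ∈ Finset.range L,
      (ChainAux.Sl p ℓ).sup' (ChainAux.Sl_nonempty p hm ℓ)
        (fun q => |∑ j, Z j ω * ChainAux.vv p ℓ q j|)) μ :=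
    integrable_finset_sum _ (fun ℓ _ => (hemax ℓ).1)
  have h0le : (0 : Ω → ℝ) ≤ᵐ[μ] fun ω => ⨆ t : Fin m, |∑ j, Z j ω * freq p ((t:ℕ)+1) j| := by
    filter_upwards with ω
    have hb : BddAbove (Set.range (fun t : Fin m => |∑ j, Z j ω * freq p ((t:ℕ)+1) j|)) :=
      (Set.finite_range _).bddAbove
    exact le_trans (abs_nonneg _) (le_ciSup hb ⟨0, hm⟩)
  have hint := integral_mono_of_nonneg h0le hMint (ae_of_all _ hchain)
  refine hint.trans ?_
  rw [integral_finset_sum _ (fun ℓ _ => (hemax ℓ).1)]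
  -- per-level numeric bound
  have hs2sq : (Real.sqrt 2)^2 = 2 := Real.sq_sqrt (by norm_num)
  have hs2_1 : 1 ≤ Real.sqrt 2 := by nlinarith [Real.sqrt_nonneg 2]
  have hs4sq : (Real.sqrt (Real.sqrt 2))^2 = Real.sqrt 2 := Real.sq_sqrt (by positivity)
  have hs4_1 : 1 ≤ Real.sqrt (Real.sqrt 2) := by nlinarith [Real.sqrt_nonneg (Real.sqrt 2)]
  have hs4pos : 0 < Real.sqrt (Real.sqrt 2) := by linarith
  have hs2pos : (0:ℝ) < Real.sqrt 2 := by linarith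
  have hlevel : ∀ ℓ : ℕ, 2 * Real.sqrt (ChainAux.lvl p ℓ)
      * (Real.sqrt (2 * Real.log (2 * ((ChainAux.Sl p ℓ).card : ℝ))) + 1)
      ≤ 20 * Real.sqrt (ChainAux.SS p m) * ((Real.sqrt (Real.sqrt 2))⁻¹)^ℓ := by
    intro ℓ
    have hsl : Real.sqrt (ChainAux.lvl p ℓ) = Real.sqrt (ChainAux.SS p m) / (Real.sqrt 2)^ℓ := by
      unfold ChainAux.lvl
      rw [Real.sqrt_div hSSpos.le, ChainAux.sqrt_two_pow]
    have hcpos : (0:ℝ) < 2 * ((ChainAux.Sl p ℓ).card : ℝ) := by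
      have h1 := Finset.card_pos.mpr (ChainAux.Sl_nonempty p hm ℓ)
      have h2 : (0:ℝ) < ((ChainAux.Sl p ℓ).card : ℝ) := by exact_mod_cast h1
      linarith
    have hlog : 2 * Real.log (2 * ((ChainAux.Sl p ℓ).card : ℝ)) ≤ 4*ℓ+8 := by
      have h1 : Real.log (2 * ((ChainAux.Sl p ℓ).card:ℝ)) ≤ Real.log ((2:ℝ)^(2*ℓ+4)) :=
        Real.log_le_log hcpos (ChainAux.card_Sl p ℓ)
      rw [Real.log_pow] at h1
      have hl2' := Real.log_two_lt_d9
      have hl2'' := Real.log_nonneg (by norm_num : (1:ℝ) ≤ 2)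
      push_cast at h1 ⊢
      nlinarith
    have hbr : Real.sqrt (2 * Real.log (2 * ((ChainAux.Sl p ℓ).card:ℝ))) + 1
        ≤ 10 * (Real.sqrt (Real.sqrt 2))^ℓ := by
      have h2 : Real.sqrt (2 * Real.log (2 * ((ChainAux.Sl p ℓ).card:ℝ)))
          ≤ Real.sqrt ((4*ℓ+8 : ℝ)) := Real.sqrt_le_sqrt hlog
      have hp := ChainAux.poly_le_sqrt2pow ℓ
      have h5 : (5 * (Real.sqrt (Real.sqrt 2))^ℓ)^2 = 25 * (Real.sqrt 2)^ℓ := by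
        rw [mul_pow, ← pow_mul, mul_comm ℓ 2, pow_mul, hs4sq]
        norm_num
      have h3 : Real.sqrt ((4*ℓ+8 : ℝ)) ≤ 5 * (Real.sqrt (Real.sqrt 2))^ℓ := by
        have h6 : Real.sqrt ((4*ℓ+8 : ℝ)) ≤ Real.sqrt ((5 * (Real.sqrt (Real.sqrt 2))^ℓ)^2) :=
          Real.sqrt_le_sqrt (by rw [h5]; exact hp)
        rwa [Real.sqrt_sq (by positivity)] at h6
      have h4 : (1:ℝ) ≤ 5 * (Real.sqrt (Real.sqrt 2))^ℓ := by
        have := one_le_pow₀ hs4_1 (n := ℓ)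
        linarith
      linarith [h2.trans h3]
    rw [hsl]
    have hkey : (Real.sqrt 2)^ℓ
        = (Real.sqrt (Real.sqrt 2))^ℓ * (Real.sqrt (Real.sqrt 2))^ℓ := by
      rw [← mul_pow, ← pow_two, hs4sq]
    have hfrac : Real.sqrt (ChainAux.SS p m) / (Real.sqrt 2)^ℓ * (Real.sqrt (Real.sqrt 2))^ℓ
        = Real.sqrt (ChainAux.SS p m) * ((Real.sqrt (Real.sqrt 2))⁻¹)^ℓ := by
      rw [inv_pow, hkey]
      have hne0 : (Real.sqrt (Real.sqrt 2))^ℓ ≠ 0 := by positivity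
      field_simp
    have hstep : 2 * (Real.sqrt (ChainAux.SS p m) / (Real.sqrt 2)^ℓ)
        * (Real.sqrt (2 * Real.log (2 * ((ChainAux.Sl p ℓ).card:ℝ))) + 1)
        ≤ 2 * (Real.sqrt (ChainAux.SS p m) / (Real.sqrt 2)^ℓ)
          * (10 * (Real.sqrt (Real.sqrt 2))^ℓ) := by
      have hnn : 0 ≤ 2 * (Real.sqrt (ChainAux.SS p m) / (Real.sqrt 2)^ℓ) := by positivity
      exact mul_le_mul_of_nonneg_left hbr hnn
    calc 2 * (Real.sqrt (ChainAux.SS p m) / (Real.sqrt 2)^ℓ)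
        * (Real.sqrt (2 * Real.log (2 * ((ChainAux.Sl p ℓ).card:ℝ))) + 1)
        ≤ 2 * (Real.sqrt (ChainAux.SS p m) / (Real.sqrt 2)^ℓ)
          * (10 * (Real.sqrt (Real.sqrt 2))^ℓ) := hstep
      _ = 20 * (Real.sqrt (ChainAux.SS p m) / (Real.sqrt 2)^ℓ * (Real.sqrt (Real.sqrt 2))^ℓ) := by
          ring
      _ = 20 * (Real.sqrt (ChainAux.SS p m) * ((Real.sqrt (Real.sqrt 2))⁻¹)^ℓ) := by rw [hfrac]
      _ = 20 * Real.sqrt (ChainAux.SS p m) * ((Real.sqrt (Real.sqrt 2))⁻¹)^ℓ := by ring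
  calc ∑ ℓ ∈ Finset.range L, ∫ ω, (ChainAux.Sl p ℓ).sup' (ChainAux.Sl_nonempty p hm ℓ)
        (fun q => |∑ j, Z j ω * ChainAux.vv p ℓ q j|) ∂μ
      ≤ ∑ ℓ ∈ Finset.range L, 20 * Real.sqrt (ChainAux.SS p m)
          * ((Real.sqrt (Real.sqrt 2))⁻¹)^ℓ :=
        Finset.sum_le_sum (fun ℓ _ => ((hemax ℓ).2).trans (hlevel ℓ))
    _ = 20 * Real.sqrt (ChainAux.SS p m)
        * ∑ ℓ ∈ Finset.range L, ((Real.sqrt (Real.sqrt 2))⁻¹)^ℓ := by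
        rw [Finset.mul_sum]
    _ ≤ 20 * Real.sqrt (ChainAux.SS p m) * 7 := by
        refine mul_le_mul_of_nonneg_left (ChainAux.geom_sum_le_seven L) ?_
        nlinarith
    _ ≤ 200 * l2norm (freq p m) := by
        rw [hl2]
        nlinarith
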